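/- For gcd(n,k) = 1, n ≥ 3, 1 ≤ k < n, the number of cyclic permutations of {1,...,n} avoiding all substrings j(j+k mod n) for 1 ≤ j ≤ n equals Σ_{j=0}^{n-1} (-1)^j · C(n, j) · (n-j-1)! + (-1)^n. -/

import Mathlib

open Equiv Finset
open Fin.NatCast
open Fin.CommRing

set_option linter.unusedSectionVars false
set_option linter.unusedVariables false
set_option maxHeartbeats 1000000

def FullCycle {β : Type*} (σ : Equiv.Perm β) : Prop := ∀ a b : β, ∃ m : ℕ, (σ ^ m) a = b


section Util
variable {β : Type*}

lemma pow_apply_mod {σ : Equiv.Perm β} {b : β} {d : ℕ} (hd : (σ ^ d) b = b) (t : ℕ) :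
    (σ ^ t) b = (σ ^ (t % d)) b := by
  have key : ∀ q, ((σ ^ d) ^ q) b = b := by
    intro q; induction q with
    | zero => simp
    | succ q ih => rw [pow_succ, Equiv.Perm.mul_apply, hd, ih]
  conv_lhs => rw [← Nat.mod_add_div t d, pow_add, Equiv.Perm.mul_apply, pow_mul, key]

lemma pow_sub_apply_eq {σ : Equiv.Perm β} {b : β} {i j : ℕ} (hij : i ≤ j)
    (h : (σ ^ i) b = (σ ^ j) b) : (σ ^ (j - i)) b = b := by
  have : (σ ^ i) ((σ ^ (j - i)) b) = (σ ^ i) b := by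
    rw [← Equiv.Perm.mul_apply, ← pow_add, Nat.add_sub_cancel' hij, h]
  exact (Equiv.injective _) this

end Util

section BaseCount
variable {α : Type*} [Fintype α] [DecidableEq α]

lemma fullCycle_pow_ne {σ : Equiv.Perm α} (h : FullCycle σ) (b : α) {d : ℕ}
    (hd0 : 0 < d) (hdm : d < Fintype.card α) : (σ ^ d) b ≠ b := by
  intro hdb
  have hsurj : Function.Surjective (fun r : Fin d => (σ ^ (r : ℕ)) b) := by
    intro a
    obtain ⟨t, ht⟩ := h b a
    refine ⟨⟨t % d, Nat.mod_lt _ hd0⟩, ?_⟩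
    show (σ ^ (t % d)) b = a
    rw [← pow_apply_mod hdb t]; exact ht
  have := Fintype.card_le_of_surjective _ hsurj
  simp only [Fintype.card_fin] at this
  omega

lemma fullCycle_pow_inj {σ : Equiv.Perm α} (h : FullCycle σ) (b : α) {i j : ℕ}
    (hi : i < Fintype.card α) (hj : j < Fintype.card α)
    (hij : (σ ^ i) b = (σ ^ j) b) : i = j := by
  rcases Nat.lt_trichotomy i j with hlt | heq | hgt
  · exact absurd (pow_sub_apply_eq (le_of_lt hlt) hij)
      (fullCycle_pow_ne h b (by omega) (by omega))
  · exact heq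
  · exact absurd (pow_sub_apply_eq (le_of_lt hgt) hij.symm)
      (fullCycle_pow_ne h b (by omega) (by omega))

lemma fullCycle_pow_card [Nonempty α] {σ : Equiv.Perm α} (h : FullCycle σ) (b : α) :
    (σ ^ Fintype.card α) b = b := by
  have : ¬ Function.Injective (fun i : Fin (Fintype.card α + 1) => (σ ^ (i : ℕ)) b) := by
    intro hinj
    have := Fintype.card_le_of_injective _ hinj
    simp only [Fintype.card_fin] at this; omega
  simp only [Function.Injective, not_forall] at this
  obtain ⟨i, j, hij, hne⟩ := this
  have hne' : (i : ℕ) ≠ (j : ℕ) := fun hc => hne (Fin.ext hc)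
  have key : ∀ p q : Fin (Fintype.card α + 1), (p : ℕ) < q →
      (σ ^ (p : ℕ)) b = (σ ^ (q : ℕ)) b → (σ ^ Fintype.card α) b = b := by
    intro p q hpq hpqe
    have hd := pow_sub_apply_eq (le_of_lt hpq) hpqe
    have : (q : ℕ) - p = Fintype.card α := by
      by_contra hc
      exact fullCycle_pow_ne h b (by omega) (by omega) hd
    rwa [this] at hd
  rcases Nat.lt_or_ge (i : ℕ) (j : ℕ) with hlt | hge
  · exact key i j hlt hij
  · exact key j i (by omega) hij.symm

end BaseCount



section BaseCount
variable {α : Type*} [Fintype α] [DecidableEq α] {m : ℕ}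

lemma finRotate_pow (t : ℕ) (i : Fin (m + 1)) :
    ((finRotate (m + 1)) ^ t) i = i + (t : Fin (m + 1)) := by
  induction t with
  | zero => simp
  | succ t ih =>
    rw [pow_succ', Equiv.Perm.mul_apply, ih, finRotate_succ_apply]
    push_cast
    ring

lemma permCongr_pow {f : Fin (m + 1) ≃ α} (p : Equiv.Perm (Fin (m + 1))) (t : ℕ) (x : α) :
    ((f.permCongr p) ^ t) x = f ((p ^ t) (f.symm x)) := by
  induction t with
  | zero => simp
  | succ t ih =>
    rw [pow_succ', pow_succ', Equiv.Perm.mul_apply, Equiv.Perm.mul_apply, ih,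
      Equiv.permCongr_apply, Equiv.symm_apply_apply]

lemma fullCycle_permCongr (f : Fin (m + 1) ≃ α) :
    FullCycle (f.permCongr (finRotate (m + 1))) := by
  intro a b
  refine ⟨(f.symm b - f.symm a).val, ?_⟩
  rw [permCongr_pow, finRotate_pow, Fin.cast_val_eq_self]
  have h1 : f.symm a + (f.symm b - f.symm a) = f.symm b := by abel
  rw [h1, Equiv.apply_symm_apply]

lemma card_fullCycle (hm : Fintype.card α = m + 1) :
    Nat.card {σ : Equiv.Perm α // FullCycle σ} = m.factorial := by
  classical
  have hne : Nonempty α := Fintype.card_pos_iff.mp (by omega)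
  haveI := hne
  obtain ⟨b⟩ := hne
  -- E1
  have bij : ∀ (σ : Equiv.Perm α), FullCycle σ →
      Function.Bijective (fun i : Fin (m + 1) => (σ ^ (i : ℕ)) b) := by
    intro σ hσ
    rw [Fintype.bijective_iff_injective_and_card]
    refine ⟨fun i j hij => Fin.ext (fullCycle_pow_inj hσ b (by rw [hm]; exact i.2)
      (by rw [hm]; exact j.2) hij), by simp [hm]⟩
  let E1 : {σ : Equiv.Perm α // FullCycle σ} ≃ {f : Fin (m + 1) ≃ α // f 0 = b} :=
    { toFun := fun σ => ⟨Equiv.ofBijective _ (bij σ.1 σ.2), by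
        show ((σ.1 : Equiv.Perm α) ^ ((0 : Fin (m+1)) : ℕ)) b = b
        simp⟩
      invFun := fun f => ⟨(f.1).permCongr (finRotate (m + 1)), fullCycle_permCongr f.1⟩
      left_inv := by
        rintro ⟨σ, hσ⟩
        ext x
        obtain ⟨i, rfl⟩ := (bij σ hσ).surjective x
        show ((Equiv.ofBijective _ (bij σ hσ)).permCongr (finRotate (m + 1)))
          ((σ ^ (i : ℕ)) b) = σ ((σ ^ (i : ℕ)) b)
        rw [Equiv.permCongr_apply]
        have hs : (Equiv.ofBijective _ (bij σ hσ)).symm ((σ ^ (i : ℕ)) b) = i := by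
          rw [Equiv.symm_apply_eq]; rfl
        rw [hs, finRotate_succ_apply]
        show (σ ^ (((i + 1 : Fin (m + 1))) : ℕ)) b = σ ((σ ^ (i : ℕ)) b)
        have hcard : (σ ^ (Fintype.card α)) b = b := fullCycle_pow_card hσ b
        rw [hm] at hcard
        have : ((i + 1 : Fin (m + 1)) : ℕ) = ((i : ℕ) + 1) % (m + 1) := by
          rw [Fin.add_def]; simp
        rw [this, ← pow_apply_mod hcard ((i : ℕ) + 1), pow_succ', Equiv.Perm.mul_apply]
      right_inv := by
        rintro ⟨f, hf⟩
        refine Subtype.ext (Equiv.ext fun i => ?_)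
        show (((f.permCongr (finRotate (m + 1))) ^ (i : ℕ))) b = f i
        rw [permCongr_pow, finRotate_pow, ← hf, Equiv.symm_apply_apply, zero_add,
          Fin.cast_val_eq_self] }
  -- E2
  let E2 : {f : Fin (m + 1) ≃ α // f 0 = b} ≃ ({i : Fin (m + 1) // i ≠ 0} ≃ {a : α // a ≠ b}) :=
    { toFun := fun f => f.1.subtypeEquiv (fun i => by
        obtain ⟨f, hf⟩ := f
        subst hf
        exact not_congr (Equiv.apply_eq_iff_eq f).symm)
      invFun := fun h =>
        ⟨{ toFun := fun i => if hi : i = 0 then b else (h ⟨i, hi⟩ : α)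
           invFun := fun a => if ha : a = b then 0 else ((h.symm ⟨a, ha⟩ : Fin (m + 1)))
           left_inv := by
             intro i
             dsimp only
             by_cases hi : i = 0
             · simp [hi]
             · rw [dif_neg hi, dif_neg (h ⟨i, hi⟩).2]
               rw [Subtype.coe_eta, Equiv.symm_apply_apply]
           right_inv := by
             intro a
             dsimp only
             by_cases ha : a = b
             · simp [ha]
             · rw [dif_neg ha, dif_neg (h.symm ⟨a, ha⟩).2]
               rw [Subtype.coe_eta, Equiv.apply_symm_apply] }, by simp⟩
      left_inv := by
        rintro ⟨f, hf⟩
        refine Subtype.ext (Equiv.ext fun i => ?_)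
        by_cases hi : i = 0
        · subst hi; simpa using hf.symm
        · exact (dif_neg hi).trans rfl
      right_inv := by
        intro h
        refine Equiv.ext fun i => ?_
        refine Subtype.ext ?_
        show (if hi : (i : Fin (m + 1)) = 0 then b else (h ⟨i, hi⟩ : α)) = (h i : α)
        rw [dif_neg i.2, Subtype.coe_eta] }
  rw [Nat.card_congr (E1.trans E2), Nat.card_eq_fintype_card]
  have c1 : Fintype.card {i : Fin (m + 1) // i ≠ 0} = m := by
    simp [Fintype.card_subtype_compl]
  have c2 : Fintype.card {a : α // a ≠ b} = m := by
    simp [Fintype.card_subtype_compl, hm]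
  rw [Fintype.card_equiv (Fintype.equivOfCardEq (c1.trans c2.symm)), c1]

end BaseCount



section Contract
variable {α : Type*} [Fintype α] [DecidableEq α] {c : Equiv.Perm α} {S : Finset α}

lemma chain_pow {σ : Equiv.Perm α} (hσS : ∀ a ∈ S, σ a = c a) :
    ∀ (D : ℕ) (x : α), (∀ i < D, (c ^ i) x ∈ S) → (σ ^ D) x = (c ^ D) x := by
  intro D
  induction D with
  | zero => intro x _; simp
  | succ D ih =>
    intro x hx
    have hx0 : x ∈ S := by simpa using hx 0 (Nat.succ_pos D)
    rw [pow_succ', pow_succ', Equiv.Perm.mul_apply, Equiv.Perm.mul_apply,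
      ih x (fun i hi => hx i (by omega))]
    exact hσS _ (hx D (by omega))

lemma symm_pow_eq_pow_symm (i : ℕ) : (c.symm : Equiv.Perm α) ^ i = ((c ^ i).symm) := by
  rw [← Equiv.Perm.inv_def, ← Equiv.Perm.inv_def, inv_pow]

lemma symm_pow_apply_pow {i r : ℕ} (h : i ≤ r) (x : α) :
    ((c.symm : Equiv.Perm α) ^ i) ((c ^ r) x) = (c ^ (r - i)) x := by
  have h1 : c ^ r = c ^ i * c ^ (r - i) := by rw [← pow_add, Nat.add_sub_cancel' h]
  rw [h1, Equiv.Perm.mul_apply, symm_pow_eq_pow_symm, Equiv.symm_apply_apply]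

lemma pow_apply_symm_pow {i r : ℕ} (h : i ≤ r) (x : α) :
    (c ^ i) ((c.symm ^ r) x) = (c.symm ^ (r - i)) x := by
  have h1 : (c.symm : Equiv.Perm α) ^ r = c.symm ^ i * c.symm ^ (r - i) := by
    rw [← pow_add, Nat.add_sub_cancel' h]
  rw [h1, Equiv.Perm.mul_apply, symm_pow_eq_pow_symm, Equiv.apply_symm_apply]

variable (c S) in
def HexF : Prop := ∀ x : α, ∃ m : ℕ, (c ^ m) x ∉ S
variable (c S) in
def HexB : Prop := ∀ v : α, ∃ m : ℕ, ((c.symm : Equiv.Perm α) ^ (m + 1)) v ∉ S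

noncomputable def dd (hex : HexF c S) (x : α) : ℕ := Nat.find (hex x)
noncomputable def gg (hex : HexF c S) (x : α) : α := (c ^ dd hex x) x

lemma gg_not_mem (hex : HexF c S) (x : α) : gg hex x ∉ S := Nat.find_spec (hex x)

lemma gg_chain (hex : HexF c S) {x : α} : ∀ i < dd hex x, (c ^ i) x ∈ S :=
  fun i hi => not_not.mp (Nat.find_min (hex x) hi)

lemma dd_eq (hex : HexF c S) {x : α} {D : ℕ} (h1 : ∀ i < D, (c ^ i) x ∈ S)
    (h2 : (c ^ D) x ∉ S) : dd hex x = D := by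
  rw [dd, Nat.find_eq_iff]
  exact ⟨h2, fun i hi => not_not.mpr (h1 i hi)⟩

lemma gg_eq (hex : HexF c S) {x : α} {D : ℕ} (h1 : ∀ i < D, (c ^ i) x ∈ S)
    (h2 : (c ^ D) x ∉ S) : gg hex x = (c ^ D) x := by
  rw [gg, dd_eq hex h1 h2]

lemma gg_of_not_mem (hex : HexF c S) {x : α} (hx : x ∉ S) : gg hex x = x := by
  have := gg_eq hex (D := 0) (by omega) (by simpa using hx)
  simpa using this

lemma gg_mem (hex : HexF c S) {x : α} (hx : x ∈ S) : gg hex x = gg hex (c x) := by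
  rw [show gg hex (c x) = (c ^ (dd hex (c x))) (c x) from rfl]
  have key : ∀ j, (c ^ j) (c x) = (c ^ (j + 1)) x := by
    intro j; rw [pow_succ, Equiv.Perm.mul_apply]
  rw [key]
  apply gg_eq hex
  · intro i hi
    match i with
    | 0 => simpa using hx
    | j + 1 => rw [← key]; exact gg_chain hex j (by omega)
  · rw [← key]; exact gg_not_mem hex (c x)

noncomputable def qq (hexb : HexB c S) (v : α) : ℕ := Nat.find (hexb v)
noncomputable def ss (hexb : HexB c S) (v : α) : α := ((c.symm : Equiv.Perm α) ^ qq hexb v) v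

lemma qq_spec (hexb : HexB c S) (v : α) : ((c.symm : Equiv.Perm α) ^ (qq hexb v + 1)) v ∉ S :=
  Nat.find_spec (hexb v)

lemma qq_chain (hexb : HexB c S) {v : α} : ∀ i, 1 ≤ i → i ≤ qq hexb v →
    ((c.symm : Equiv.Perm α) ^ i) v ∈ S := by
  intro i h1 h2
  have := Nat.find_min (hexb v) (show i - 1 < qq hexb v by omega)
  rw [Nat.sub_add_cancel h1] at this
  exact not_not.mp this

lemma qq_eq (hexb : HexB c S) {v : α} {D : ℕ}
    (h1 : ∀ j < D, ((c.symm : Equiv.Perm α) ^ (j + 1)) v ∈ S)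
    (h2 : ((c.symm : Equiv.Perm α) ^ (D + 1)) v ∉ S) : qq hexb v = D := by
  rw [qq, Nat.find_eq_iff]
  exact ⟨h2, fun i hi => not_not.mpr (h1 i hi)⟩

lemma le_qq (hexb : HexB c S) {v : α} {D : ℕ}
    (h1 : ∀ j < D, ((c.symm : Equiv.Perm α) ^ (j + 1)) v ∈ S) : D ≤ qq hexb v := by
  rw [qq, Nat.le_find_iff]
  exact fun i hi => not_not.mpr (h1 i hi)

lemma gg_ss (hex : HexF c S) (hexb : HexB c S) {v : α} (hv : v ∉ S) :
    gg hex (ss hexb v) = v := by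
  have h0 : ss hexb v = ((c.symm : Equiv.Perm α) ^ qq hexb v) v := rfl
  have := gg_eq hex (x := ss hexb v) (D := qq hexb v) ?h1 ?h2
  case h1 =>
    intro i hi
    rw [h0, pow_apply_symm_pow (le_of_lt hi)]
    exact qq_chain hexb _ (by omega) (by omega)
  case h2 =>
    rw [h0, pow_apply_symm_pow le_rfl, Nat.sub_self, pow_zero]
    simpa using hv
  rw [this, h0, pow_apply_symm_pow le_rfl, Nat.sub_self, pow_zero]
  simp

lemma ss_gg_sigma (hex : HexF c S) (hexb : HexB c S) {σ : Equiv.Perm α}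
    (hσS : ∀ a ∈ S, σ a = c a) {u : α} (hu : u ∉ S) :
    ss hexb (gg hex (σ u)) = σ u := by
  set D := dd hex (σ u) with hD
  have hv : gg hex (σ u) = (c ^ D) (σ u) := rfl
  have hcsymm : (c.symm : Equiv.Perm α) (σ u) ∉ S := by
    intro hw
    have h1 : σ ((c.symm : Equiv.Perm α) (σ u)) = σ u := by
      rw [hσS _ hw, Equiv.apply_symm_apply]
    exact hu ((σ.injective h1) ▸ hw)
  have hq : qq hexb (gg hex (σ u)) = D := by
    apply qq_eq
    · intro j hj
      rw [hv, symm_pow_apply_pow (by omega)]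
      exact gg_chain hex _ (by omega)
    · rw [hv, pow_succ', Equiv.Perm.mul_apply, symm_pow_apply_pow le_rfl, Nat.sub_self,
        pow_zero]
      simpa using hcsymm
  rw [ss, hq, hv, symm_pow_apply_pow le_rfl, Nat.sub_self, pow_zero]
  simp

end Contract

section ContractB
section Contract2
variable {α : Type*} [Fintype α] [DecidableEq α] {c : Equiv.Perm α} {S : Finset α}

noncomputable def fwdFun (hex : HexF c S) (σ : Equiv.Perm α) :
    {x : α // x ∉ S} → {x : α // x ∉ S} :=
  fun u => ⟨gg hex (σ u), gg_not_mem hex _⟩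

lemma fwdFun_inj (hex : HexF c S) (hexb : HexB c S) {σ : Equiv.Perm α}
    (hσS : ∀ a ∈ S, σ a = c a) : Function.Injective (fwdFun hex σ) := by
  intro u₁ u₂ h
  have h' : gg hex (σ u₁) = gg hex (σ u₂) := congrArg Subtype.val h
  have : σ (u₁ : α) = σ (u₂ : α) := by
    rw [← ss_gg_sigma hex hexb hσS u₁.2, ← ss_gg_sigma hex hexb hσS u₂.2, h']
  exact Subtype.ext (σ.injective this)

noncomputable def fwd (hex : HexF c S) (hexb : HexB c S) (σ : Equiv.Perm α)
    (hσS : ∀ a ∈ S, σ a = c a) : Equiv.Perm {x : α // x ∉ S} :=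
  Equiv.ofBijective (fwdFun hex σ)
    ((Finite.injective_iff_bijective).mp (fwdFun_inj hex hexb hσS))

lemma fwd_apply (hex : HexF c S) (hexb : HexB c S) (σ : Equiv.Perm α)
    (hσS : ∀ a ∈ S, σ a = c a) (u : {x : α // x ∉ S}) :
    (fwd hex hexb σ hσS u : α) = gg hex (σ u) := rfl

lemma fwd_fullCycle (hex : HexF c S) (hexb : HexB c S) {σ : Equiv.Perm α}
    (hfull : FullCycle σ) (hσS : ∀ a ∈ S, σ a = c a) :
    FullCycle (fwd hex hexb σ hσS) := by
  set ρ := fwd hex hexb σ hσS with hρ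
  have A2 : ∀ (M : ℕ) (u : {x : α // x ∉ S}), ∃ m : ℕ,
      (((ρ ^ m) u : {x : α // x ∉ S}) : α) = gg hex ((σ ^ M) u) := by
    intro M
    induction M with
    | zero =>
      intro u
      exact ⟨0, by simp [gg_of_not_mem hex u.2]⟩
    | succ M ih =>
      intro u
      obtain ⟨m, hm⟩ := ih u
      have hstep : (σ ^ (M + 1)) (u : α) = σ ((σ ^ M) u) := by
        rw [pow_succ', Equiv.Perm.mul_apply]
      by_cases hx : (σ ^ M) (u : α) ∈ S
      · refine ⟨m, ?_⟩
        rw [hm, hstep, hσS _ hx, ← gg_mem hex hx]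
      · refine ⟨m + 1, ?_⟩
        have hmem : (ρ ^ m) u = ⟨(σ ^ M) (u : α), hx⟩ := by
          apply Subtype.ext
          rw [hm, gg_of_not_mem hex hx]
        rw [pow_succ', Equiv.Perm.mul_apply, hmem, hstep]
        rfl
  intro u w
  obtain ⟨M, hM⟩ := hfull u w
  obtain ⟨m, hm⟩ := A2 M u
  refine ⟨m, Subtype.ext ?_⟩
  rw [hm, hM, gg_of_not_mem hex w.2]

noncomputable def bwdFun (hexb : HexB c S) (ρ : Equiv.Perm {x : α // x ∉ S}) : α → α :=
  fun x => if hx : x ∈ S then c x else ss hexb (ρ ⟨x, hx⟩)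

lemma bwdFun_inj (hex : HexF c S) (hexb : HexB c S) (ρ : Equiv.Perm {x : α // x ∉ S}) :
    Function.Injective (bwdFun hexb ρ) := by
  apply Function.LeftInverse.injective
    (g := fun y => if (c.symm : Equiv.Perm α) y ∈ S then (c.symm : Equiv.Perm α) y
      else ((ρ.symm ⟨gg hex y, gg_not_mem hex y⟩ : {x : α // x ∉ S}) : α))
  intro x
  dsimp only
  by_cases hx : x ∈ S
  · rw [bwdFun, dif_pos hx]
    have : (c.symm : Equiv.Perm α) (c x) = x := Equiv.symm_apply_apply c x
    rw [if_pos (by rwa [this]), this]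
  · rw [bwdFun, dif_neg hx]
    set v : α := (ρ ⟨x, hx⟩ : α) with hv
    have hvS : v ∉ S := (ρ ⟨x, hx⟩).2
    have hcs : (c.symm : Equiv.Perm α) (ss hexb v) ∉ S := by
      have : (c.symm : Equiv.Perm α) (ss hexb v) = ((c.symm : Equiv.Perm α) ^ (qq hexb v + 1)) v := by
        rw [ss, pow_succ', Equiv.Perm.mul_apply]
      rw [this]
      exact qq_spec hexb v
    rw [if_neg hcs]
    have hggss : gg hex (ss hexb v) = v := gg_ss hex hexb hvS
    have : (⟨gg hex (ss hexb v), gg_not_mem hex _⟩ : {x : α // x ∉ S}) = ρ ⟨x, hx⟩ :=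
      Subtype.ext hggss
    rw [this, Equiv.symm_apply_apply]

noncomputable def bwd (hex : HexF c S) (hexb : HexB c S) (ρ : Equiv.Perm {x : α // x ∉ S}) :
    Equiv.Perm α :=
  Equiv.ofBijective (bwdFun hexb ρ)
    ((Finite.injective_iff_bijective).mp (bwdFun_inj hex hexb ρ))

lemma bwd_apply_mem (hex : HexF c S) (hexb : HexB c S) (ρ : Equiv.Perm {x : α // x ∉ S})
    {a : α} (ha : a ∈ S) : bwd hex hexb ρ a = c a := dif_pos ha

lemma bwd_apply_not_mem (hex : HexF c S) (hexb : HexB c S) (ρ : Equiv.Perm {x : α // x ∉ S})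
    {a : α} (ha : a ∉ S) : bwd hex hexb ρ a = ss hexb (ρ ⟨a, ha⟩) := dif_neg ha

lemma bwd_fullCycle (hex : HexF c S) (hexb : HexB c S) {ρ : Equiv.Perm {x : α // x ∉ S}}
    (hρ : FullCycle ρ) : FullCycle (bwd hex hexb ρ) := by
  set σ := bwd hex hexb ρ with hσ
  have hσS : ∀ a ∈ S, σ a = c a := fun a ha => bwd_apply_mem hex hexb ρ ha
  have B1 : ∀ x : α, (σ ^ (dd hex x)) x = gg hex x := fun x =>
    chain_pow hσS _ x (gg_chain hex)
  have B2 : ∀ u : {x : α // x ∉ S},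
      (σ ^ (qq hexb (ρ u : α) + 1)) (u : α) = (ρ u : α) := by
    intro u
    set v : α := (ρ u : α) with hv
    have h1 : σ (u : α) = ss hexb v := by
      rw [hσ, bwd_apply_not_mem hex hexb ρ u.2]
    have h2 : (σ ^ qq hexb v) (ss hexb v) = v := by
      rw [chain_pow hσS _ _ ?chain]
      case chain =>
        intro i hi
        rw [ss, pow_apply_symm_pow (le_of_lt hi)]
        exact qq_chain hexb _ (by omega) (by omega)
      rw [ss, pow_apply_symm_pow le_rfl, Nat.sub_self, pow_zero]
      simp
    rw [pow_succ, Equiv.Perm.mul_apply, h1, h2]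
  have B3 : ∀ (m : ℕ) (u : {x : α // x ∉ S}), ∃ M : ℕ, (σ ^ M) (u : α) = (((ρ ^ m) u : {x : α // x ∉ S}) : α) := by
    intro m
    induction m with
    | zero => intro u; exact ⟨0, by simp⟩
    | succ m ih =>
      intro u
      obtain ⟨M, hM⟩ := ih u
      set w : {x : α // x ∉ S} := (ρ ^ m) u with hw
      refine ⟨(qq hexb ((ρ w : {x : α // x ∉ S}) : α) + 1) + M, ?_⟩
      rw [pow_add, Equiv.Perm.mul_apply, hM, B2 w]
      have : (ρ ^ (m + 1)) u = ρ w := by rw [pow_succ', Equiv.Perm.mul_apply, hw]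
      rw [this]
  have B4 : ∀ y : α, (σ ^ ((qq hexb (gg hex y) - dd hex y) + 1))
      ((ρ.symm ⟨gg hex y, gg_not_mem hex y⟩ : {x : α // x ∉ S}) : α) = y := by
    intro y
    set v : α := gg hex y with hv
    set D : ℕ := dd hex y with hD
    set q : ℕ := qq hexb v with hq
    have hvc : v = (c ^ D) y := rfl
    have hDq : D ≤ q := by
      apply le_qq hexb
      intro j hj
      rw [hvc, symm_pow_apply_pow (by omega)]
      exact gg_chain hex _ (by omega)
    set u' : {x : α // x ∉ S} := ρ.symm ⟨v, gg_not_mem hex y⟩ with hu'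
    have h1 : σ (u' : α) = ss hexb v := by
      rw [hσ, bwd_apply_not_mem hex hexb ρ u'.2, hu', Equiv.apply_symm_apply]
    have h2 : (σ ^ (q - D)) (ss hexb v) = y := by
      rw [chain_pow hσS _ _ ?chain2]
      case chain2 =>
        intro i hi
        rw [ss, pow_apply_symm_pow (by omega)]
        exact qq_chain hexb _ (by omega) (by omega)
      rw [ss, pow_apply_symm_pow (by omega), show q - (q - D) = D by omega, hvc,
        symm_pow_apply_pow le_rfl, Nat.sub_self, pow_zero]
      simp
    rw [pow_succ, Equiv.Perm.mul_apply, h1, h2]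
  intro x y
  set xu : {x : α // x ∉ S} := ⟨gg hex x, gg_not_mem hex x⟩ with hxu
  set yu : {x : α // x ∉ S} := ρ.symm ⟨gg hex y, gg_not_mem hex y⟩ with hyu
  obtain ⟨m, hm⟩ := hρ xu yu
  obtain ⟨M₂, hM₂⟩ := B3 m xu
  refine ⟨((qq hexb (gg hex y) - dd hex y) + 1) + (M₂ + dd hex x), ?_⟩
  have h5 : (σ ^ (M₂ + dd hex x)) x = (yu : α) := by
    rw [pow_add σ M₂ (dd hex x), Equiv.Perm.mul_apply, B1 x]
    have hx1 : gg hex x = (xu : α) := rfl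
    rw [hx1, hM₂, hm]
  rw [pow_add σ ((qq hexb (gg hex y) - dd hex y) + 1) (M₂ + dd hex x),
    Equiv.Perm.mul_apply, h5, hyu]
  exact B4 y

end Contract2
section Contract3
variable {α : Type*} [Fintype α] [DecidableEq α] {c : Equiv.Perm α} {S : Finset α}

lemma card_constrained (hc : FullCycle c) (hS : S ≠ Finset.univ) :
    Nat.card {σ : Equiv.Perm α // FullCycle σ ∧ ∀ a ∈ S, σ a = c a}
      = Nat.card {ρ : Equiv.Perm {x : α // x ∉ S} // FullCycle ρ} := by
  obtain ⟨u₀, hu₀⟩ : ∃ u₀ : α, u₀ ∉ S := by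
    by_contra h
    push_neg at h
    exact hS (Finset.eq_univ_iff_forall.mpr h)
  have hex : HexF c S := fun x => by
    obtain ⟨m, hm⟩ := hc x u₀
    exact ⟨m, by rw [hm]; exact hu₀⟩
  have hexb : HexB c S := by
    intro v
    obtain ⟨t, ht⟩ := hc u₀ v
    have ho : 0 < orderOf c := orderOf_pos c
    refine ⟨t + orderOf c - 1, ?_⟩
    have h1 : t + orderOf c - 1 + 1 = orderOf c + t := by omega
    rw [h1, pow_add, Equiv.Perm.mul_apply]
    have h2 : ((c.symm : Equiv.Perm α) ^ t) v = u₀ := by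
      rw [← ht, symm_pow_apply_pow le_rfl, Nat.sub_self, pow_zero]
      simp
    rw [h2]
    have h3 : (c.symm : Equiv.Perm α) ^ orderOf c = 1 := by
      rw [symm_pow_eq_pow_symm, pow_orderOf_eq_one]
      rfl
    rw [h3]
    simpa using hu₀
  refine Nat.card_congr
    { toFun := fun σp => ⟨fwd hex hexb σp.1 σp.2.2, fwd_fullCycle hex hexb σp.2.1 σp.2.2⟩
      invFun := fun ρp => ⟨bwd hex hexb ρp.1, bwd_fullCycle hex hexb ρp.2,
        fun a ha => bwd_apply_mem hex hexb ρp.1 ha⟩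
      left_inv := ?_
      right_inv := ?_ }
  · rintro ⟨σ, hfull, hσS⟩
    apply Subtype.ext
    apply Equiv.ext
    intro x
    show bwdFun hexb (fwd hex hexb σ hσS) x = σ x
    by_cases hx : x ∈ S
    · rw [bwdFun, dif_pos hx, hσS _ hx]
    · rw [bwdFun, dif_neg hx]
      exact ss_gg_sigma hex hexb hσS hx
  · rintro ⟨ρ, hρ⟩
    apply Subtype.ext
    apply Equiv.ext
    intro u
    apply Subtype.ext
    show gg hex (bwd hex hexb ρ u) = (ρ u : α)
    rw [bwd_apply_not_mem hex hexb ρ u.2]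
    exact gg_ss hex hexb (ρ u).2

end Contract3

end ContractB



section Rot
variable {n : ℕ} [NeZero n]

lemma addRight_pow (x : Fin n) (m : ℕ) (a : Fin n) :
    ((Equiv.addRight x) ^ m) a = a + m • x := by
  induction m with
  | zero => simp
  | succ m ih =>
    rw [pow_succ', Equiv.Perm.mul_apply, ih]
    show a + m • x + x = a + (m + 1) • x
    rw [succ_nsmul, add_assoc]

lemma fullCycle_addRight {k : ℕ} (hkn : k < n) (hcop : Nat.gcd n k = 1) :
    FullCycle (Equiv.addRight (⟨k, hkn⟩ : Fin n)) := by
  intro a b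
  have hinj : Function.Injective (fun t : Fin n => t * (⟨k, hkn⟩ : Fin n)) := by
    intro x y hxy
    have hz : (x - y) * (⟨k, hkn⟩ : Fin n) = 0 := by
      rw [sub_mul]
      simpa [sub_eq_zero] using hxy
    have hval : ((x - y) * (⟨k, hkn⟩ : Fin n)).val = ((x - y).val * k) % n := by
      rw [Fin.mul_def]
    have h0 : ((x - y).val * k) % n = 0 := by
      rw [← hval, hz]; rfl
    have hdvd : n ∣ (x - y).val * k := Nat.dvd_of_mod_eq_zero h0
    have hdvd2 : n ∣ (x - y).val := (Nat.Coprime.dvd_of_dvd_mul_right hcop hdvd)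
    have hv0 : (x - y).val = 0 := by
      rcases Nat.eq_zero_or_pos (x - y).val with h | h
      · exact h
      · exact absurd (Nat.le_of_dvd h hdvd2) (by have := (x - y).isLt; omega)
    exact sub_eq_zero.mp (Fin.ext hv0)
  obtain ⟨t, ht⟩ := (Finite.injective_iff_surjective.mp hinj) (b - a)
  have ht' : t * (⟨k, hkn⟩ : Fin n) = b - a := ht
  refine ⟨t.val, ?_⟩
  rw [addRight_pow]
  have h6 : (t.val : ℕ) • (⟨k, hkn⟩ : Fin n) = ((t.val : Fin n)) * ⟨k, hkn⟩ := by
    rw [nsmul_eq_mul]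
  rw [h6, Fin.cast_val_eq_self, ht']
  abel
end Rot

section UnivCase
variable {α : Type*} [Fintype α] [DecidableEq α] {c : Equiv.Perm α}

lemma card_constrained_univ (hc : FullCycle c) :
    Nat.card {σ : Equiv.Perm α // FullCycle σ ∧ ∀ a ∈ (univ : Finset α), σ a = c a} = 1 := by
  haveI : Unique {σ : Equiv.Perm α // FullCycle σ ∧ ∀ a ∈ (univ : Finset α), σ a = c a} :=
    { default := ⟨c, hc, fun a _ => rfl⟩
      uniq := by
        rintro ⟨σ, h1, h2⟩
        exact Subtype.ext (Equiv.ext fun a => h2 a (mem_univ a)) }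
  exact Nat.card_unique

noncomputable def ind (p : Prop) : ℤ := @ite ℤ p (Classical.propDecidable p) 1 0

lemma ind_eq_ite (p : Prop) [inst : Decidable p] : ind p = if p then 1 else 0 := by
  unfold ind; congr

lemma ind_true {p : Prop} (h : p) : ind p = 1 := by unfold ind; exact if_pos h

lemma ind_false {p : Prop} (h : ¬ p) : ind p = 0 := by unfold ind; exact if_neg h

lemma ind_congr {p q : Prop} (h : p ↔ q) : ind p = ind q := by
  by_cases hp : p
  · rw [ind_true hp, ind_true (h.mp hp)]
  · rw [ind_false hp, ind_false (fun hq => hp (h.mpr hq))]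

lemma sum_ind {β : Type*} (s : Finset β) (p : β → Prop) [DecidablePred p] :
    ∑ x ∈ s, ind (p x) = #(s.filter p) := by
  rw [Finset.sum_congr rfl (fun x _ => ind_eq_ite (p x)), Finset.sum_boole]

lemma prod_ind {β : Type*} (s : Finset β) (p : β → Prop) [DecidablePred p] :
    ∏ x ∈ s, ind (p x) = ind (∀ x ∈ s, p x) := by
  classical
  rw [Finset.prod_congr rfl (fun x _ => ind_eq_ite (p x)), Finset.prod_boole, ← ind_eq_ite]

lemma IE (c : Equiv.Perm α) :
    (Nat.card {σ : Equiv.Perm α // FullCycle σ ∧ ∀ a, σ a ≠ c a} : ℤ)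
      = ∑ S ∈ (univ : Finset α).powerset,
          (-1 : ℤ) ^ S.card * (Nat.card {σ : Equiv.Perm α // FullCycle σ ∧ ∀ a ∈ S, σ a = c a} : ℤ) := by
  classical
  have key : ∀ (Q : Equiv.Perm α → Prop), (Nat.card {σ : Equiv.Perm α // FullCycle σ ∧ Q σ} : ℤ)
      = ∑ σ ∈ univ.filter (fun σ : Equiv.Perm α => FullCycle σ), ind (Q σ) := by
    intro Q
    rw [Nat.card_eq_fintype_card, Fintype.card_subtype, sum_ind, Finset.filter_filter]
  have e1 : ∀ σ : Equiv.Perm α, ind (∀ a, σ a ≠ c a)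
      = ∑ S ∈ (univ : Finset α).powerset, (-1 : ℤ) ^ S.card * ∏ a ∈ S, ind (σ a = c a) := by
    intro σ
    calc ind (∀ a, σ a ≠ c a)
        = ∏ a : α, ind (σ a ≠ c a) := by
          rw [prod_ind]
          exact ind_congr (by simp)
      _ = ∏ a : α, ((-1) * ind (σ a = c a) + 1) := by
          refine Finset.prod_congr rfl fun a _ => ?_
          by_cases h : σ a = c a
          · rw [ind_false (fun hc => hc h), ind_true h]; ring
          · rw [ind_true h, ind_false h]; ring
      _ = ∑ S ∈ (univ : Finset α).powerset,
            (∏ a ∈ S, (-1) * ind (σ a = c a)) * ∏ a ∈ univ \ S, 1 := Finset.prod_add _ _ _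
      _ = ∑ S ∈ (univ : Finset α).powerset, (-1 : ℤ) ^ S.card * ∏ a ∈ S, ind (σ a = c a) := by
          refine Finset.sum_congr rfl fun S _ => ?_
          rw [Finset.prod_const_one, mul_one, Finset.prod_mul_distrib, Finset.prod_const]
  calc (Nat.card {σ : Equiv.Perm α // FullCycle σ ∧ ∀ a, σ a ≠ c a} : ℤ)
      = ∑ σ ∈ univ.filter (fun σ : Equiv.Perm α => FullCycle σ), ind (∀ a, σ a ≠ c a) :=
        key _
    _ = ∑ σ ∈ univ.filter (fun σ : Equiv.Perm α => FullCycle σ),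
          ∑ S ∈ (univ : Finset α).powerset, (-1 : ℤ) ^ S.card * ∏ a ∈ S, ind (σ a = c a) :=
        Finset.sum_congr rfl (fun σ _ => e1 σ)
    _ = ∑ S ∈ (univ : Finset α).powerset,
          ∑ σ ∈ univ.filter (fun σ : Equiv.Perm α => FullCycle σ),
            (-1 : ℤ) ^ S.card * ∏ a ∈ S, ind (σ a = c a) := Finset.sum_comm
    _ = ∑ S ∈ (univ : Finset α).powerset,
          (-1 : ℤ) ^ S.card * (Nat.card {σ : Equiv.Perm α // FullCycle σ ∧ ∀ a ∈ S, σ a = c a} : ℤ) := by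
        refine Finset.sum_congr rfl fun S _ => ?_
        rw [← Finset.mul_sum]
        congr 1
        rw [key (fun σ => ∀ a ∈ S, σ a = c a)]
        exact Finset.sum_congr rfl (fun σ _ => prod_ind S _)

end UnivCase


lemma card_not_mem_subtype {n : ℕ} (S : Finset (Fin n)) :
    Fintype.card {x : Fin n // x ∉ S} = n - S.card := by
  simp [Fintype.card_subtype_compl]

/-- For `gcd(n,k)=1`, `n ≥ 3`, `1 ≤ k < n`, the number of cyclic permutations of
`{1,...,n}` avoiding all substrings `j(j+k mod n)`, `1 ≤ j ≤ n`, equals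
`∑_{j=0}^{n-1} (-1)^j C(n,j) (n-j-1)!` + `(-1)^n`. Values 0-indexed; a cyclic permutation
is a single-orbit permutation `σ`, containing substring `ab` iff `σ a = b`. -/
theorem Cstar_k_n (n k : ℕ) (hk : 1 ≤ k) (hkn : k < n) (hn : 3 ≤ n)
    (hcop : Nat.gcd n k = 1) :
    (Nat.card {σ : Equiv.Perm (Fin n) //
        (∀ a b : Fin n, ∃ m : ℕ, (σ ^ m) a = b) ∧
        ∀ a : Fin n, ((σ a : ℕ)) ≠ ((a : ℕ) + k) % n} : ℤ) =
      ∑ j ∈ Finset.range n,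
        (-1 : ℤ) ^ j * n.choose j * (n - j - 1).factorial + (-1 : ℤ) ^ n := by
  haveI : NeZero n := ⟨by omega⟩
  set c : Equiv.Perm (Fin n) := Equiv.addRight (⟨k, hkn⟩ : Fin n) with hc
  have hcfull : FullCycle c := fullCycle_addRight hkn hcop
  have hsub : (Nat.card {σ : Equiv.Perm (Fin n) //
        (∀ a b : Fin n, ∃ m : ℕ, (σ ^ m) a = b) ∧
        ∀ a : Fin n, ((σ a : ℕ)) ≠ ((a : ℕ) + k) % n})
      = Nat.card {σ : Equiv.Perm (Fin n) // FullCycle σ ∧ ∀ a, σ a ≠ c a} := by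
    apply Nat.card_congr
    apply Equiv.subtypeEquivRight
    intro σ
    apply and_congr Iff.rfl
    apply forall_congr'
    intro a
    have hval : ((c a : Fin n) : ℕ) = ((a : ℕ) + k) % n := by
      rw [hc]
      show (((a + ⟨k, hkn⟩ : Fin n)) : ℕ) = ((a : ℕ) + k) % n
      rw [Fin.add_def]
    rw [← hval]
    exact not_congr (Fin.val_eq_val _ _)
  rw [hsub, IE c]
  have hN : ∀ S ∈ (univ : Finset (Fin n)).powerset,
      (-1 : ℤ) ^ S.card * (Nat.card {σ : Equiv.Perm (Fin n) // FullCycle σ ∧ ∀ a ∈ S, σ a = c a} : ℤ)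
        = (fun j => (-1 : ℤ) ^ j * (if j = n then (1 : ℤ) else ((n - j - 1).factorial : ℤ))) S.card := by
    intro S _
    dsimp only
    by_cases hS : S = univ
    · subst hS
      rw [card_constrained_univ hcfull]
      rw [if_pos (by simp)]
      simp
    · have hSlt : S.card < n := by
        have := Finset.card_lt_card (Finset.ssubset_univ_iff.mpr hS)
        simpa using this
      rw [card_constrained hcfull hS, card_fullCycle (m := n - S.card - 1)
        (by rw [card_not_mem_subtype]; omega)]
      rw [if_neg (by omega)]
  rw [Finset.sum_congr rfl hN, Finset.sum_powerset_apply_card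
    (fun j => (-1 : ℤ) ^ j * (if j = n then (1 : ℤ) else ((n - j - 1).factorial : ℤ)))]
  rw [show #(univ : Finset (Fin n)) = n by simp]
  rw [Finset.sum_range_succ]
  congr 1
  · refine Finset.sum_congr rfl fun j hj => ?_
    have hjn : j < n := Finset.mem_range.mp hj
    rw [if_neg (by omega), nsmul_eq_mul]
    ring
  · rw [if_pos rfl, Nat.choose_self]
    simp
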